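/- arXiv:2412.14059 — 2 statements merged into one kernel-verified Lean document; each statement's English description precedes it below -/
import Mathlib

section
/- Let Ω be the closed region in the first quadrant bounded by the coordinate axes and the graph of G, where G(x) = R·g(x/R) - r·g(x/r) for 0 ≤ x ≤ r and G(x) = R·g(x/R) for r ≤ x ≤ R, with g(t) = (√(1-t²) - t·arccos(t))/π and 0 < r < R. Then the area of Ω equals (R² - r²)/8. -/
open Real MeasureTheory intervalIntegral Set

noncomputable def g (t : ℝ) : ℝ := (Real.sqrt (1 - t^2) - t * Real.arccos t) / Real.pi

noncomputable def G (r R x : ℝ) : ℝ :=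
  if x ≤ r then R * g (x / R) - r * g (x / r) else R * g (x / R)

lemma continuous_g : Continuous g := by
  unfold g
  have h1 : Continuous fun t : ℝ => Real.sqrt (1 - t^2) :=
    Real.continuous_sqrt.comp (by continuity)
  have h2 : Continuous fun t : ℝ => t * Real.arccos t :=
    continuous_id.mul Real.continuous_arccos
  exact (h1.sub h2).div_const _

lemma g_one : g 1 = 0 := by simp [g, Real.arccos_one]

lemma hasDerivAt_g {t : ℝ} (h1 : -1 < t) (h2 : t < 1) :
    HasDerivAt g (-Real.arccos t / Real.pi) t := by
  have hs : 0 < Real.sqrt (1 - t^2) := Real.sqrt_pos.2 (by nlinarith)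
  have hsq : (1 : ℝ) - t^2 ≠ 0 := by nlinarith
  have hd0 : HasDerivAt (fun t : ℝ => 1 - t^2) (-(2*t)) t := by
    simpa using ((hasDerivAt_pow 2 t).const_sub 1)
  have hd1 : HasDerivAt (fun t : ℝ => Real.sqrt (1 - t^2)) (-t / Real.sqrt (1 - t^2)) t := by
    have := hd0.sqrt hsq
    convert this using 1
    field_simp
  have hd2 : HasDerivAt Real.arccos (-(1 / Real.sqrt (1 - t^2))) t :=
    Real.hasDerivAt_arccos (by linarith) (by linarith)
  have hd3 : HasDerivAt (fun t => t * Real.arccos t)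
      (1 * Real.arccos t + t * (-(1 / Real.sqrt (1 - t^2)))) t :=
    (hasDerivAt_id t).mul hd2
  have := (hd1.sub hd3).div_const Real.pi
  convert this using 1
  · rfl
  · rfl
  · rfl
  field_simp
  ring

noncomputable def F (t : ℝ) : ℝ :=
  (3 * t * Real.sqrt (1 - t^2) + Real.arcsin t - 2 * t^2 * Real.arccos t) / (4 * Real.pi)

lemma continuous_F : Continuous F := by
  unfold F
  have h1 : Continuous fun t : ℝ => Real.sqrt (1 - t^2) :=
    Real.continuous_sqrt.comp (by continuity)
  have : Continuous fun t : ℝ => 3 * t * Real.sqrt (1 - t^2) + Real.arcsin t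
      - 2 * t^2 * Real.arccos t := by
    apply Continuous.sub
    · exact ((continuous_const.mul continuous_id).mul h1).add Real.continuous_arcsin
    · exact (continuous_const.mul (continuous_pow 2)).mul Real.continuous_arccos
  exact this.div_const _

lemma F_zero : F 0 = 0 := by simp [F]

lemma F_one : F 1 = 1 / 8 := by
  simp [F, Real.arcsin_one, Real.arccos_one]
  field_simp
  ring

lemma hasDerivAt_F {t : ℝ} (h1 : -1 < t) (h2 : t < 1) : HasDerivAt F (g t) t := by
  have hsp : 0 < Real.sqrt (1 - t^2) := Real.sqrt_pos.2 (by nlinarith)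
  have hsq : (1 : ℝ) - t^2 ≠ 0 := by nlinarith
  have hss : Real.sqrt (1 - t^2) ^ 2 = 1 - t^2 := Real.sq_sqrt (by nlinarith)
  have hd0 : HasDerivAt (fun t : ℝ => 1 - t^2) (-(2*t)) t := by
    simpa using ((hasDerivAt_pow 2 t).const_sub 1)
  have hd1 : HasDerivAt (fun t : ℝ => Real.sqrt (1 - t^2)) (-t / Real.sqrt (1 - t^2)) t := by
    have := hd0.sqrt hsq
    convert this using 1
    field_simp
  have hd2 : HasDerivAt Real.arccos (-(1 / Real.sqrt (1 - t^2))) t :=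
    Real.hasDerivAt_arccos (by linarith) (by linarith)
  have hd3 : HasDerivAt Real.arcsin (1 / Real.sqrt (1 - t^2)) t :=
    Real.hasDerivAt_arcsin (by linarith) (by linarith)
  have hA : HasDerivAt (fun t : ℝ => 3 * t * Real.sqrt (1 - t^2))
      (3 * Real.sqrt (1 - t^2) + 3 * t * (-t / Real.sqrt (1 - t^2))) t := by
    have := ((hasDerivAt_id t).const_mul (3:ℝ)).mul hd1
    simp only [id_eq] at this
    convert this using 1
    · rfl
    · rfl
    · rfl
    ring
  have hB : HasDerivAt (fun t : ℝ => 2 * t^2 * Real.arccos t)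
      (2 * (2 * t) * Real.arccos t + 2 * t^2 * (-(1 / Real.sqrt (1 - t^2)))) t := by
    have hp : HasDerivAt (fun t : ℝ => 2 * t^2) (2 * (2 * t)) t := by
      simpa using ((hasDerivAt_pow 2 t).const_mul (2:ℝ))
    exact hp.mul hd2
  have := ((hA.add hd3).sub hB).div_const (4 * Real.pi)
  convert this using 1
  · rfl
  · rfl
  · rfl
  unfold g
  rw [div_eq_div_iff Real.pi_ne_zero (by positivity)]
  field_simp
  nlinarith [hss, Real.pi_pos]

lemma integral_scaled {a : ℝ} (ha : 0 < a) :
    ∫ x in (0:ℝ)..a, a * g (x / a) = a^2 / 8 := by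
  have hcontI : Continuous fun x : ℝ => a * g (x / a) :=
    continuous_const.mul (continuous_g.comp (continuous_id.div_const a))
  have key := intervalIntegral.integral_eq_sub_of_hasDerivAt_of_le
    (f := fun x => a^2 * F (x/a)) (f' := fun x => a * g (x / a)) ha.le
    ((continuous_const.mul (continuous_F.comp (continuous_id.div_const a))).continuousOn)
    ?_ (hcontI.intervalIntegrable _ _)
  · rw [key, div_self ha.ne', zero_div, F_one, F_zero]; ring
  · intro x hx
    have ht0 : 0 < x / a := div_pos hx.1 ha
    have ht1 : x / a < 1 := (div_lt_one ha).2 hx.2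
    have hinner : HasDerivAt (fun x : ℝ => x / a) (1 / a) x := by
      simpa using (hasDerivAt_id x).div_const a
    have := ((hasDerivAt_F (by linarith) ht1).comp x hinner).const_mul (a^2)
    convert this using 1
    · rfl
    · rfl
    field_simp

lemma g_nonneg {t : ℝ} (h0 : 0 ≤ t) (h1 : t ≤ 1) : 0 ≤ g t := by
  have hanti : AntitoneOn g (Icc (0:ℝ) 1) := by
    apply antitoneOn_of_deriv_nonpos (convex_Icc 0 1) continuous_g.continuousOn
    · intro x hx
      rw [interior_Icc] at hx
      exact (hasDerivAt_g (by linarith [hx.1]) hx.2).differentiableAt.differentiableWithinAt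
    · intro x hx
      rw [interior_Icc] at hx
      rw [(hasDerivAt_g (by linarith [hx.1]) hx.2).deriv]
      have := Real.arccos_nonneg x
      have := Real.pi_pos
      apply div_nonpos_of_nonpos_of_nonneg <;> linarith
  have := hanti ⟨h0, h1⟩ ⟨zero_le_one, le_refl 1⟩ h1
  rwa [g_one] at this

lemma phi_mono {x r R : ℝ} (hr : 0 < r) (hrR : r < R) (hx0 : 0 ≤ x) (hxr : x ≤ r) :
    r * g (x / r) ≤ R * g (x / R) := by
  have key : MonotoneOn (fun a => a * g (x / a)) (Icc r R) := by
    have hderiv : ∀ a ∈ Ioo r R, HasDerivAt (fun a => a * g (x / a))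
        (Real.sqrt (1 - (x/a)^2) / Real.pi) a := by
      intro a ha
      have ha0 : 0 < a := hr.trans ha.1
      have ht0 : 0 ≤ x / a := div_nonneg hx0 ha0.le
      have ht1 : x / a < 1 := (div_lt_one ha0).2 (hxr.trans_lt ha.1)
      have hinner : HasDerivAt (fun a : ℝ => x / a) (-(x / a^2)) a := by
        have := (hasDerivAt_inv ha0.ne').const_mul x
        simp only [← div_eq_mul_inv] at this
        convert this using 1
        · rfl
        · rfl
        field_simp
      have hgd : HasDerivAt (fun a : ℝ => g (x / a))
          (-Real.arccos (x/a) / Real.pi * (-(x / a^2))) a :=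
        (hasDerivAt_g (by linarith) ht1).comp a hinner
      have := (hasDerivAt_id a).mul hgd
      simp only [id_eq, one_mul] at this
      convert this using 1
      · rfl
      · rfl
      · rfl
      have hacos : Real.arccos (x/a) = Real.arccos (x/a) := rfl
      have hgv : g (x/a) = (Real.sqrt (1 - (x/a)^2) - (x/a) * Real.arccos (x/a)) / Real.pi := rfl
      rw [hgv]
      field_simp
      ring
    apply monotoneOn_of_deriv_nonneg (convex_Icc r R)
    · apply ContinuousOn.mul continuousOn_id
      apply continuous_g.comp_continuousOn
      exact continuousOn_const.div continuousOn_id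
        (fun a ha => (hr.trans_le ha.1).ne')
    · intro a ha
      rw [interior_Icc] at ha
      exact (hderiv a ha).differentiableAt.differentiableWithinAt
    · intro a ha
      rw [interior_Icc] at ha
      rw [(hderiv a ha).deriv]
      positivity
  exact key ⟨le_refl r, hrR.le⟩ ⟨hrR.le, le_refl R⟩ hrR.le

lemma continuous_G (r R : ℝ) (hr : 0 < r) : Continuous (G r R) := by
  unfold G
  apply Continuous.if
  · intro x hx
    have hxr : x = r := by
      rw [show {x : ℝ | x ≤ r} = Set.Iic r from rfl, frontier_Iic] at hx
      simpa using hx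
    subst hxr
    rw [div_self hr.ne', g_one, mul_zero, sub_zero]
  · exact (continuous_const.mul (continuous_g.comp (continuous_id.div_const R))).sub
      (continuous_const.mul (continuous_g.comp (continuous_id.div_const r)))
  · exact continuous_const.mul (continuous_g.comp (continuous_id.div_const R))

lemma G_nonneg {r R : ℝ} (hr : 0 < r) (hrR : r < R) {x : ℝ} (hx0 : 0 ≤ x) (hxR : x ≤ R) :
    0 ≤ G r R x := by
  have hR : 0 < R := hr.trans hrR
  unfold G
  split_ifs with h
  · linarith [phi_mono hr hrR hx0 h]
  · have : 0 ≤ g (x / R) := g_nonneg (div_nonneg hx0 hR.le) ((div_le_one hR).2 hxR)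
    positivity

lemma integral_G {r R : ℝ} (hr : 0 < r) (hrR : r < R) :
    ∫ x in (0:ℝ)..R, G r R x = (R^2 - r^2) / 8 := by
  have hR : 0 < R := hr.trans hrR
  have hc1 : Continuous fun x : ℝ => R * g (x / R) :=
    continuous_const.mul (continuous_g.comp (continuous_id.div_const R))
  have hc2 : Continuous fun x : ℝ => r * g (x / r) :=
    continuous_const.mul (continuous_g.comp (continuous_id.div_const r))
  have hcG : Continuous (G r R) := continuous_G r R hr
  have e1 : ∫ x in (0:ℝ)..r, G r R x
      = (∫ x in (0:ℝ)..r, R * g (x / R)) - ∫ x in (0:ℝ)..r, r * g (x / r) := by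
    rw [← intervalIntegral.integral_sub (hc1.intervalIntegrable _ _) (hc2.intervalIntegrable _ _)]
    apply intervalIntegral.integral_congr
    intro x hx
    rw [Set.uIcc_of_le hr.le] at hx
    simp only [G, if_pos hx.2]
  have e2 : ∫ x in r..R, G r R x = ∫ x in r..R, R * g (x / R) := by
    apply intervalIntegral.integral_congr
    intro x hx
    rw [Set.uIcc_of_le hrR.le] at hx
    unfold G
    split_ifs with h
    · have hxr : x = r := le_antisymm h hx.1
      subst hxr
      rw [div_self hr.ne', g_one, mul_zero, sub_zero]
    · rfl
  have adj : (∫ x in (0:ℝ)..r, R * g (x / R)) + ∫ x in r..R, R * g (x / R)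
      = ∫ x in (0:ℝ)..R, R * g (x / R) :=
    intervalIntegral.integral_add_adjacent_intervals
      (hc1.intervalIntegrable _ _) (hc1.intervalIntegrable _ _)
  have split : ∫ x in (0:ℝ)..R, G r R x
      = (∫ x in (0:ℝ)..r, G r R x) + ∫ x in r..R, G r R x :=
    (intervalIntegral.integral_add_adjacent_intervals
      (hcG.intervalIntegrable _ _) (hcG.intervalIntegrable _ _)).symm
  rw [split, e1, e2, integral_scaled hr]
  have : (∫ x in (0:ℝ)..r, R * g (x / R)) + ∫ x in r..R, R * g (x / R) = R^2/8 := by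
    rw [adj, integral_scaled hR]
  linarith

theorem area_Omega (r R : ℝ) (hr : 0 < r) (hrR : r < R) :
    (MeasureTheory.volume
        {p : ℝ × ℝ | 0 ≤ p.1 ∧ p.1 ≤ R ∧ 0 ≤ p.2 ∧ p.2 ≤ G r R p.1}).toReal
      = (R^2 - r^2) / 8 := by
  have hR : 0 < R := hr.trans hrR
  have hcG : Continuous (G r R) := continuous_G r R hr
  set S : Set (ℝ × ℝ) := {p : ℝ × ℝ | 0 ≤ p.1 ∧ p.1 ≤ R ∧ 0 ≤ p.2 ∧ p.2 ≤ G r R p.1} with hSdef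
  have hS : MeasurableSet S := by
    have : S = {p : ℝ × ℝ | 0 ≤ p.1} ∩ ({p | p.1 ≤ R} ∩ ({p | 0 ≤ p.2} ∩ {p | p.2 ≤ G r R p.1})) := by
      ext p; simp [hSdef, and_assoc]
    rw [this]
    exact (measurableSet_le measurable_const measurable_fst).inter
      ((measurableSet_le measurable_fst measurable_const).inter
        ((measurableSet_le measurable_const measurable_snd).inter
          (measurableSet_le measurable_snd ((hcG.measurable).comp measurable_fst))))
  have fiber : ∀ x : ℝ, (volume (Prod.mk x ⁻¹' S))
      = Set.indicator (Icc 0 R) (fun x => ENNReal.ofReal (G r R x)) x := by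
    intro x
    by_cases hx : x ∈ Icc (0:ℝ) R
    · rw [Set.indicator_of_mem hx]
      have : Prod.mk x ⁻¹' S = Icc 0 (G r R x) := by
        ext y
        simp [hSdef, Set.mem_Icc, hx.1, hx.2]
      rw [this, Real.volume_Icc, sub_zero]
    · rw [Set.indicator_of_notMem hx]
      have : Prod.mk x ⁻¹' S = ∅ := by
        ext y
        simp only [Set.mem_preimage, Set.mem_empty_iff_false, iff_false, hSdef, Set.mem_setOf_eq]
        rw [Set.mem_Icc, not_and_or] at hx
        push_neg at hx
        rcases hx with h | h
        · exact fun hy => absurd hy.1 (not_le.2 h)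
        · exact fun hy => absurd hy.2.1 (not_le.2 h)
      rw [this, measure_empty]
  have hvol : volume S = ∫⁻ x, Set.indicator (Icc 0 R) (fun x => ENNReal.ofReal (G r R x)) x := by
    rw [MeasureTheory.Measure.volume_eq_prod ℝ ℝ, MeasureTheory.Measure.prod_apply hS]
    exact lintegral_congr fiber
  rw [hvol, lintegral_indicator measurableSet_Icc _]
  have hae : 0 ≤ᵐ[volume.restrict (Icc (0:ℝ) R)] G r R := by
    rw [Filter.EventuallyLE, ae_restrict_iff' measurableSet_Icc]
    exact ae_of_all _ fun x hx => G_nonneg hr hrR hx.1 hx.2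
  rw [← MeasureTheory.ofReal_integral_eq_lintegral_ofReal
    (hcG.integrableOn_Icc) hae]
  have : ∫ x in Icc (0:ℝ) R, G r R x = (R^2 - r^2) / 8 := by
    rw [MeasureTheory.integral_Icc_eq_integral_Ioc,
      ← intervalIntegral.integral_of_le hR.le]
    exact integral_G hr hrR
  rw [this, ENNReal.toReal_ofReal (by nlinarith)]
end

section
/- Let 0 < r < R, let g(t) = (√(1-t²) - t·arccos(t))/π, and let G : [r,R] → [0, G(r)] be G(x) = R·g(x/R) with inverse H. Then H is differentiable on (0, G(r)) and H'(y) ≍ -y^{-1/3} near y = 0; precisely, there exist constants 0 < c₁ ≤ c₂ and δ > 0 such that c₁·y^{-1/3} ≤ -H'(y) ≤ c₂·y^{-1/3} for all y ∈ (0, δ). -/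
open Real Set

lemma g_hasDerivAt {t : ℝ} (h1 : -1 < t) (h2 : t < 1) :
    HasDerivAt g (-(Real.arccos t) / π) t := by
  have hpos : (0:ℝ) < 1 - t^2 := by nlinarith
  have hs : Real.sqrt (1 - t^2) ≠ 0 := by positivity
  have hsq : HasDerivAt (fun t : ℝ => Real.sqrt (1 - t^2))
      (1 / (2 * Real.sqrt (1 - t^2)) * (-(2*t))) t := by
    have h1' : HasDerivAt (fun t : ℝ => 1 - t^2) (-(2*t)) t := by
      simpa using ((hasDerivAt_pow 2 t).const_sub 1)
    exact (Real.hasDerivAt_sqrt hpos.ne').comp t h1'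
  have harc : HasDerivAt (fun t : ℝ => t * Real.arccos t)
      (1 * Real.arccos t + t * (-(1 / Real.sqrt (1 - t^2)))) t :=
    (hasDerivAt_id t).mul (Real.hasDerivAt_arccos h1.ne' h2.ne)
  have := (hsq.sub harc).div_const π
  refine this.congr_deriv ?_
  field_simp
  ring

lemma cubic_lower {θ : ℝ} (h0 : 0 < θ) (h1 : θ ≤ 1) :
    11/48 * θ^3 ≤ Real.sin θ - θ * Real.cos θ := by
  have habs : |θ| ≤ 1 := by rw [abs_of_pos h0]; exact h1
  have hs := abs_le.1 (Real.sin_bound habs)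
  have hc := abs_le.1 (Real.cos_bound habs)
  rw [abs_of_pos h0] at hs hc
  have h4 : θ^4 ≤ θ^3 := by nlinarith
  have h5 : θ^5 ≤ θ^3 := by nlinarith
  nlinarith [mul_le_mul_of_nonneg_left hc.2 h0.le, hs.1]

lemma cubic_upper {θ : ℝ} (h0 : 0 < θ) (h1 : θ ≤ 1) :
    Real.sin θ - θ * Real.cos θ ≤ 7/16 * θ^3 := by
  have habs : |θ| ≤ 1 := by rw [abs_of_pos h0]; exact h1
  have hs := abs_le.1 (Real.sin_bound habs)
  have hc := abs_le.1 (Real.cos_bound habs)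
  rw [abs_of_pos h0] at hs hc
  have h4 : θ^4 ≤ θ^3 := by nlinarith
  have h5 : θ^5 ≤ θ^3 := by nlinarith
  nlinarith [mul_le_mul_of_nonneg_left hc.1 h0.le, hs.2]

set_option maxHeartbeats 1000000 in
theorem H_deriv_blowup (r R : ℝ) (hr : 0 < r) (hrR : r < R) (H : ℝ → ℝ)
    (hH : ∀ x ∈ Set.Icc r R, H (R * g (x / R)) = x) :
    (∀ y ∈ Set.Ioo 0 (R * g (r / R)), DifferentiableAt ℝ H y) ∧
    ∃ c₁ > (0:ℝ), ∃ c₂ : ℝ, c₁ ≤ c₂ ∧ ∃ δ > (0:ℝ), ∀ y ∈ Set.Ioo (0:ℝ) δ,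
      c₁ * y ^ (-(1:ℝ)/3) ≤ -(deriv H y) ∧ -(deriv H y) ≤ c₂ * y ^ (-(1:ℝ)/3) := by
  have hR : 0 < R := hr.trans hrR
  have hπ : (0:ℝ) < π := Real.pi_pos
  set G : ℝ → ℝ := fun x => R * g (x / R) with hGdef
  have hGr_eq : R * g (r / R) = G r := rfl
  -- derivative of G
  have hGd : ∀ x ∈ Ioo 0 R, HasDerivAt G (-(Real.arccos (x/R)) / π) x := by
    intro x hx
    have ht1 : -1 < x / R := by
      have : 0 < x / R := div_pos hx.1 hR
      linarith
    have ht2 : x / R < 1 := (div_lt_one hR).2 hx.2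
    have hdiv : HasDerivAt (fun x : ℝ => x / R) (1/R) x := by
      simpa using (hasDerivAt_id x).div_const R
    have := (((g_hasDerivAt ht1 ht2).comp x hdiv).const_mul R)
    refine this.congr_deriv ?_
    field_simp
  have hgcont : Continuous g := by
    unfold g
    exact ((Real.continuous_sqrt.comp (by continuity)).sub
      (continuous_id.mul Real.continuous_arccos)).div_const π
  have hGcont : Continuous G := continuous_const.mul (hgcont.comp (continuous_id.div_const R))
  have hGanti : StrictAntiOn G (Icc 0 R) := by
    apply strictAntiOn_of_deriv_neg (convex_Icc 0 R) hGcont.continuousOn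
    intro x hx
    rw [interior_Icc] at hx
    rw [(hGd x hx).deriv]
    have harc : 0 < Real.arccos (x/R) := Real.arccos_pos.2 ((div_lt_one hR).2 hx.2)
    exact div_neg_of_neg_of_pos (neg_lt_zero.2 harc) hπ
  have hGR : G R = 0 := by
    simp only [hGdef, div_self hR.ne', g, Real.arccos_one]
    norm_num
  have hGr_pos : 0 < G r := by
    rw [← hGR]
    exact hGanti ⟨hr.le, hrR.le⟩ ⟨hR.le, le_refl R⟩ hrR
  -- surjectivity
  have hsurj : ∀ y ∈ Ioo 0 (G r), ∃ x ∈ Ioo r R, G x = y := by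
    intro y hy
    have hy' : y ∈ Ioo (G R) (G r) := by rw [hGR]; exact hy
    obtain ⟨x, hx, hGx⟩ := intermediate_value_Ioo' hrR.le hGcont.continuousOn hy'
    exact ⟨x, hx, hGx⟩
  have hinv : ∀ y ∈ Ioo 0 (G r), G (H y) = y ∧ H y ∈ Ioo r R := by
    intro y hy
    obtain ⟨x, hx, hGx⟩ := hsurj y hy
    have hxI : x ∈ Icc r R := Ioo_subset_Icc_self hx
    have : H y = x := by rw [← hGx]; exact hH x hxI
    rw [this]; exact ⟨hGx, hx⟩
  have hIccsub : ∀ x ∈ Ioo r R, x ∈ Icc (0:ℝ) R :=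
    fun x hx => ⟨(hr.trans hx.1).le, hx.2.le⟩
  -- H is strictly antitone (as -H strictly monotone)
  have hHanti : StrictMonoOn (fun z => -H z) (Ioo 0 (G r)) := by
    intro y₁ h₁ y₂ h₂ h12
    obtain ⟨hG1, hx1⟩ := hinv y₁ h₁
    obtain ⟨hG2, hx2⟩ := hinv y₂ h₂
    simp only [neg_lt_neg_iff]
    by_contra h
    push_neg at h
    have := hGanti.antitoneOn (hIccsub _ hx1) (hIccsub _ hx2) h
    rw [hG1, hG2] at this
    linarith
  -- continuity of H on the interval
  have hHcont : ∀ y ∈ Ioo 0 (G r), ContinuousAt H y := by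
    intro y hy
    obtain ⟨hGH, hxm⟩ := hinv y hy
    have hsub : Ioo (-R) (-r) ⊆ (fun z => -H z) '' (Ioo 0 (G r)) := by
      intro w hw
      obtain ⟨hw1, hw2⟩ := hw
      have hx : -w ∈ Ioo r R := ⟨by linarith, by linarith⟩
      have hGmem : G (-w) ∈ Ioo 0 (G r) := by
        constructor
        · rw [← hGR]; exact hGanti (hIccsub _ hx) ⟨hR.le, le_refl R⟩ hx.2
        · exact hGanti ⟨hr.le, hrR.le⟩ (hIccsub _ hx) hx.1
      refine ⟨G (-w), hGmem, ?_⟩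
      have := hH (-w) (Ioo_subset_Icc_self hx)
      simp only [hGdef] at this ⊢
      rw [this]; ring
    have himg : (fun z => -H z) '' (Ioo 0 (G r)) ∈ nhds (-H y) := by
      apply Filter.mem_of_superset (isOpen_Ioo.mem_nhds _) hsub
      exact ⟨by linarith [hxm.2], by linarith [hxm.1]⟩
    have hm := hHanti.continuousAt_of_image_mem_nhds (isOpen_Ioo.mem_nhds hy) himg
    have : ContinuousAt (fun z => -(fun z => -H z) z) y := hm.neg
    simpa using this
  -- H has derivative
  have hHd : ∀ y ∈ Ioo 0 (G r),
      HasDerivAt H (-(Real.arccos (H y / R)) / π)⁻¹ y := by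
    intro y hy
    obtain ⟨hGH, hxm⟩ := hinv y hy
    have hne : -(Real.arccos (H y / R)) / π ≠ 0 := by
      have harc : 0 < Real.arccos (H y / R) :=
        Real.arccos_pos.2 ((div_lt_one hR).2 hxm.2)
      exact ne_of_lt (div_neg_of_neg_of_pos (neg_lt_zero.2 harc) hπ)
    have hGd' : HasDerivAt G (-(Real.arccos (H y / R)) / π) (H y) :=
      hGd (H y) ⟨hr.trans hxm.1, hxm.2⟩
    exact HasDerivAt.of_local_left_inverse (hHcont y hy) hGd' hne
      (Filter.eventually_of_mem (isOpen_Ioo.mem_nhds hy) (fun z hz => (hinv z hz).1))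
  constructor
  · intro y hy
    rw [hGr_eq] at hy
    exact (hHd y hy).differentiableAt
  -- the blow-up estimates
  have hA : (0:ℝ) < R / π := by positivity
  set A : ℝ := R / π with hAdef
  set a : ℝ := 11/48 * A with hadef
  set b : ℝ := 7/16 * A with hbdef
  have ha : 0 < a := by positivity
  have hb : 0 < b := by positivity
  have hab : a ≤ b := by
    rw [hadef, hbdef]
    nlinarith
  refine ⟨π * a ^ ((1:ℝ)/3), by positivity, π * b ^ ((1:ℝ)/3), ?_, ?_⟩
  · exact mul_le_mul_of_nonneg_left (Real.rpow_le_rpow ha.le hab (by norm_num)) hπ.le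
  -- choose δ
  have hcos1 : Real.cos 1 < 1 := by
    have := abs_le.1 (Real.cos_bound (x := 1) (by norm_num))
    norm_num at this
    linarith [this.2]
  set x₀ : ℝ := max (R * Real.cos 1) ((r+R)/2) with hx₀def
  have hx₀R : x₀ < R := by
    apply max_lt
    · nlinarith
    · linarith
  have hrx₀ : r < x₀ := lt_max_of_lt_right (by linarith)
  have hx₀0 : (0:ℝ) ≤ x₀ := le_max_of_le_right (by linarith)
  have hx₀I : x₀ ∈ Icc (0:ℝ) R := ⟨hx₀0, hx₀R.le⟩
  refine ⟨G x₀, ?_, ?_⟩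
  · rw [← hGR]; exact hGanti hx₀I ⟨hR.le, le_refl R⟩ hx₀R
  have hδGr : G x₀ < G r := hGanti ⟨hr.le, hrR.le⟩ hx₀I hrx₀
  intro y hy
  have hyG : y ∈ Ioo 0 (G r) := ⟨hy.1, hy.2.trans hδGr⟩
  obtain ⟨hGH, hxm⟩ := hinv y hyG
  set x : ℝ := H y with hxdef
  set t : ℝ := x / R with htdef
  set θ : ℝ := Real.arccos t with hθdef
  have hx₀x : x₀ < x := by
    have := (hGanti.lt_iff_gt (hIccsub _ hxm) hx₀I).1 (by rw [hGH]; exact hy.2)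
    exact this
  have ht1 : t < 1 := (div_lt_one hR).2 hxm.2
  have htc : Real.cos 1 < t := by
    rw [htdef, lt_div_iff₀ hR]
    calc Real.cos 1 * R = R * Real.cos 1 := by ring
    _ ≤ x₀ := le_max_left _ _
    _ < x := hx₀x
  have ht_1 : -1 ≤ t := by
    have := Real.cos_one_pos
    linarith
  have hθpos : 0 < θ := Real.arccos_pos.2 ht1
  have hθ1 : θ ≤ 1 := by
    have h1π : (1:ℝ) ≤ π := by linarith [Real.pi_gt_three]
    have := Real.strictAntiOn_arccos.antitoneOn
      ⟨Real.neg_one_le_cos 1, hcos1.le⟩ ⟨ht_1, ht1.le⟩ htc.le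
    rwa [Real.arccos_cos (by norm_num) h1π] at this
  have hcosθ : Real.cos θ = t := Real.cos_arccos ht_1 ht1.le
  have hsinθ : Real.sin θ = Real.sqrt (1 - t^2) := Real.sin_arccos t
  have hy_eq : y = A * (Real.sin θ - θ * Real.cos θ) := by
    rw [← hGH]
    simp only [hGdef, g, hAdef, ← htdef, hsinθ, hcosθ, ← hθdef]
    ring
  have hylo : a * θ^3 ≤ y := by
    rw [hy_eq, hadef]
    nlinarith [cubic_lower hθpos hθ1, hA]
  have hyhi : y ≤ b * θ^3 := by
    rw [hy_eq, hbdef]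
    nlinarith [cubic_upper hθpos hθ1, hA]
  -- derivative value
  have hD : -(deriv H y) = π / θ := by
    rw [(hHd y hyG).deriv]
    rw [neg_div, ← hθdef]
    rw [inv_neg, neg_neg, inv_div]
  set u : ℝ := y ^ ((1:ℝ)/3) with hudef
  have hu : 0 < u := Real.rpow_pos_of_pos hy.1 _
  have hu3 : u^(3:ℕ) = y := by
    rw [hudef, ← Real.rpow_natCast (y ^ ((1:ℝ)/3)) 3, ← Real.rpow_mul hy.1.le]
    norm_num
  have hyneg : y ^ (-(1:ℝ)/3) = u⁻¹ := by
    rw [show -(1:ℝ)/3 = -(1/3) by norm_num, Real.rpow_neg hy.1.le, hudef]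
  have hcubea : (a^((1:ℝ)/3))^(3:ℕ) = a := by
    rw [← Real.rpow_natCast (a ^ ((1:ℝ)/3)) 3, ← Real.rpow_mul ha.le]
    norm_num
  have hcubeb : (b^((1:ℝ)/3))^(3:ℕ) = b := by
    rw [← Real.rpow_natCast (b ^ ((1:ℝ)/3)) 3, ← Real.rpow_mul hb.le]
    norm_num
  have hapow : 0 < a^((1:ℝ)/3) := Real.rpow_pos_of_pos ha _
  have hbpow : 0 < b^((1:ℝ)/3) := Real.rpow_pos_of_pos hb _
  constructor
  · -- lower bound
    have hle : a^((1:ℝ)/3) * θ ≤ u := by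
      apply le_of_pow_le_pow_left₀ (n := 3) (by norm_num) hu.le
      rw [hu3, mul_pow, hcubea]
      exact hylo
    rw [hD, hyneg, ← div_eq_mul_inv, div_le_div_iff₀ hu hθpos]
    nlinarith [mul_le_mul_of_nonneg_left hle hπ.le]
  · -- upper bound
    have hle : u ≤ b^((1:ℝ)/3) * θ := by
      apply le_of_pow_le_pow_left₀ (n := 3) (by norm_num) (by positivity)
      rw [hu3, mul_pow, hcubeb]
      exact hyhi
    rw [hD, hyneg, ← div_eq_mul_inv, div_le_div_iff₀ hθpos hu]
    nlinarith [mul_le_mul_of_nonneg_left hle hπ.le]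
end
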